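/- Let 0 < γ_b < γ_t < 1, define F(x) = log( ((1−γ_t) + γ_t·e^x) / ((1−γ_b) + γ_b·e^x) ), and set x₀ = (1/2)·log( (1−γ_t)(1−γ_b) / (γ_t·γ_b) ). Then F is centrally symmetric about the point (x₀, F(x₀)): for every x ∈ ℝ, F(x₀ + x) + F(x₀ − x) = 2·F(x₀) (Theorem 5, symmetry part). -/
import Mathlib


open Real

theorem stmt_8 (γb γt : ℝ) (hγb : 0 < γb) (hγbt : γb < γt) (hγt : γt < 1)
    (F : ℝ → ℝ)
    (hF : ∀ x : ℝ,
      F x = Real.log (((1 - γt) + γt * Real.exp x) / ((1 - γb) + γb * Real.exp x)))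
    (x0 : ℝ) (hx0 : x0 = (1 / 2) * Real.log ((1 - γt) * (1 - γb) / (γt * γb))) :
    ∀ x : ℝ, F (x0 + x) + F (x0 - x) = 2 * F x0 := by
  intro x
  set a := 1 - γt with ha'
  set b := γt with hb'
  set c := 1 - γb with hc'
  set d := γb with hd'
  have hapos : 0 < a := by simp [ha']; linarith
  have hbpos : 0 < b := by linarith
  have hcpos : 0 < c := by simp [hc']; linarith
  have hdpos : 0 < d := by exact hγb
  set s := Real.exp x0 with hs'
  set t := Real.exp x with ht'
  have hspos : 0 < s := Real.exp_pos _
  have htpos : 0 < t := Real.exp_pos _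
  -- key relation: b*d*s^2 = a*c
  have hkey : b * d * s ^ 2 = a * c := by
    have hfrac : 0 < a * c / (b * d) := by positivity
    have : s ^ 2 = a * c / (b * d) := by
      rw [hs', ← Real.exp_nat_mul]
      have : (2 : ℝ) * x0 = Real.log (a * c / (b * d)) := by
        rw [hx0]; ring
      push_cast
      rw [this, Real.exp_log hfrac]
    rw [this]
    field_simp
  have pos1 : 0 < a + b * (s * t) := by positivity
  have pos2 : 0 < a + b * (s / t) := by positivity
  have pos3 : 0 < c + d * (s * t) := by positivity
  have pos4 : 0 < c + d * (s / t) := by positivity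
  have pos5 : 0 < a + b * s := by positivity
  have pos6 : 0 < c + d * s := by positivity
  have e1 : Real.exp (x0 + x) = s * t := by rw [Real.exp_add]
  have e2 : Real.exp (x0 - x) = s / t := by rw [Real.exp_sub]
  -- the polynomial identity
  have hpoly : (a + b * (s * t)) * (a + b * (s / t)) * (c + d * s) ^ 2 =
      (c + d * (s * t)) * (c + d * (s / t)) * (a + b * s) ^ 2 := by
    have htne : t ≠ 0 := ne_of_gt htpos
    field_simp
    linear_combination s * (t - 1) ^ 2 * (a * d - b * c) * hkey
  -- rewrite F values as log differences
  have hlog : ∀ y : ℝ, 0 < y → ∀ z : ℝ, 0 < z → Real.log (y / z) = Real.log y - Real.log z :=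
    fun y hy z hz => Real.log_div (ne_of_gt hy) (ne_of_gt hz)
  have hF1 : F (x0 + x) = Real.log (a + b * (s * t)) - Real.log (c + d * (s * t)) := by
    rw [hF, e1]; exact hlog _ pos1 _ pos3
  have hF2 : F (x0 - x) = Real.log (a + b * (s / t)) - Real.log (c + d * (s / t)) := by
    rw [hF, e2]; exact hlog _ pos2 _ pos4
  have hF0 : F x0 = Real.log (a + b * s) - Real.log (c + d * s) := by
    rw [hF]
    simp only [← hs']
    exact hlog _ pos5 _ pos6
  rw [hF1, hF2, hF0]
  have hlogs : Real.log ((a + b * (s * t)) * (a + b * (s / t)) * (c + d * s) ^ 2) =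
      Real.log ((c + d * (s * t)) * (c + d * (s / t)) * (a + b * s) ^ 2) := by rw [hpoly]
  rw [Real.log_mul (by positivity) (by positivity), Real.log_mul (by positivity) (by positivity),
      Real.log_mul (by positivity) (by positivity), Real.log_mul (by positivity) (by positivity),
      Real.log_pow, Real.log_pow] at hlogs
  push_cast at hlogs
  linarith
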